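/- Let G be a connected finite simple graph on n vertices, let k be an even integer with 4 ≤ k ≤ 2n/3, let V_h be a set of k/2 vertices of G of highest degrees, and let d_h = (2/k)·∑_{v ∈ V_h} d_G(v). Suppose the induced subgraph G[V(G)∖V_h] contains a subgraph on exactly k vertices with average degree at least d, where d ≥ 0. Then there exists a set S of exactly k vertices of G such that G[S] is connected and σ(G[S]) ≥ d²·(k−2) / (2k·max{k, 2d_h}). -/

import Mathlib

open Finset

variable {V : Type*}

noncomputable def graphDensity [Fintype V] (G : SimpleGraph V) : ℝ :=
  2 * G.edgeSet.ncard / Fintype.card V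

noncomputable def setDensity (G : SimpleGraph V) (A : Set V) : ℝ :=
  2 * (G.induce A).edgeSet.ncard / A.ncard

noncomputable def indDensity (G : SimpleGraph V) (S : Finset V) : ℝ :=
  2 * (G.induce (S : Set V)).edgeSet.ncard / S.card

noncomputable def subDensity {G : SimpleGraph V} (H : G.Subgraph) : ℝ :=
  2 * H.edgeSet.ncard / H.verts.ncard

noncomputable def maxKDensity (G : SimpleGraph V) (k : ℕ) : ℝ :=
  sSup {x : ℝ | ∃ H : G.Subgraph, H.verts.ncard = k ∧ x = subDensity H}

noncomputable def maxConnKDensity (G : SimpleGraph V) (k : ℕ) : ℝ :=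
  sSup {x : ℝ | ∃ H : G.Subgraph, H.verts.ncard = k ∧ H.Connected ∧ x = subDensity H}

noncomputable def maxDensity (G : SimpleGraph V) : ℝ :=
  sSup {x : ℝ | ∃ H : G.Subgraph, H.verts.Nonempty ∧ x = subDensity H}

def cutCount (G : SimpleGraph V) [DecidableRel G.Adj] (S T : Finset V) : ℕ :=
  ((S ×ˢ T).filter fun p => G.Adj p.1 p.2).card

def IsCompOf (G : SimpleGraph V) (A W : Set V) : Prop :=
  A.Nonempty ∧ A ⊆ W ∧ (G.induce A).Connected ∧
    ∀ B : Set V, A ⊆ B → B ⊆ W → (G.induce B).Connected → B = A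

noncomputable def subWDensity {G : SimpleGraph V} (w : Sym2 V → ℝ) (H : G.Subgraph) : ℝ :=
  2 * (∑ᶠ e ∈ H.edgeSet, w e) / H.verts.ncard

noncomputable def indWDensity (G : SimpleGraph V) (w : Sym2 V → ℝ) (S : Finset V) : ℝ :=
  2 * (∑ᶠ e ∈ {e : Sym2 V | e ∈ G.edgeSet ∧ ∀ v ∈ e, v ∈ S}, w e) / S.card

noncomputable def maxKWDensity (G : SimpleGraph V) (w : Sym2 V → ℝ) (k : ℕ) : ℝ :=
  sSup {x : ℝ | ∃ H : G.Subgraph, H.verts.ncard = k ∧ x = subWDensity w H}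

noncomputable def maxConnKWDensity (G : SimpleGraph V) (w : Sym2 V → ℝ) (k : ℕ) : ℝ :=
  sSup {x : ℝ | ∃ H : G.Subgraph, H.verts.ncard = k ∧ H.Connected ∧ x = subWDensity w H}

/-! ### Auxiliary lemmas -/

/-- The set of edges of `G` lying inside a vertex set `S`. -/
def edgesIn (G : SimpleGraph V) (S : Set V) : Set (Sym2 V) :=
  {e | e ∈ G.edgeSet ∧ ∀ v ∈ e, v ∈ S}

lemma edgesIn_mono (G : SimpleGraph V) {S T : Set V} (h : S ⊆ T) :
    edgesIn G S ⊆ edgesIn G T := fun _e ⟨he, hv⟩ => ⟨he, fun v hv' => h (hv v hv')⟩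

lemma edgesIn_eq_image (G : SimpleGraph V) (S : Set V) :
    edgesIn G S = Sym2.map (Subtype.val : S → V) '' (G.induce S).edgeSet := by
  ext e
  constructor
  · rintro ⟨he, hv⟩
    induction e with
    | _ x y =>
      refine ⟨s(⟨x, hv x (by simp)⟩, ⟨y, hv y (by simp)⟩), ?_, by simp⟩
      simpa using he
  · rintro ⟨e', he', rfl⟩
    induction e' with
    | _ a b =>
      rw [SimpleGraph.mem_edgeSet] at he'
      have hadj : G.Adj a.val b.val := he'
      refine ⟨hadj, ?_⟩
      intro v hv
      simp only [Sym2.map_pair_eq, Sym2.mem_iff] at hv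
      rcases hv with rfl | rfl
      · exact a.2
      · exact b.2

lemma ncard_edgesIn (G : SimpleGraph V) (S : Set V) :
    (edgesIn G S).ncard = (G.induce S).edgeSet.ncard := by
  rw [edgesIn_eq_image, Set.ncard_image_of_injective _ (Sym2.map.injective Subtype.val_injective)]

lemma edgesIn_split (G : SimpleGraph V) {A B : Set V} (hd : Disjoint A B)
    (hcross : ∀ a ∈ A, ∀ b ∈ B, ¬ G.Adj a b) [Finite (Sym2 V)] :
    (edgesIn G (A ∪ B)).ncard = (edgesIn G A).ncard + (edgesIn G B).ncard := by
  have hunion : edgesIn G (A ∪ B) = edgesIn G A ∪ edgesIn G B := by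
    ext e
    induction e with
    | _ x y =>
      constructor
      · rintro ⟨he, hv⟩
        have hx := hv x (by simp); have hy := hv y (by simp)
        have hadj : G.Adj x y := he
        rcases hx with hx | hx <;> rcases hy with hy | hy
        · exact Or.inl ⟨he, by intro v hv'; simp at hv'; rcases hv' with rfl | rfl <;> assumption⟩
        · exact absurd hadj (hcross x hx y hy)
        · exact absurd hadj.symm (hcross y hy x hx)
        · exact Or.inr ⟨he, by intro v hv'; simp at hv'; rcases hv' with rfl | rfl <;> assumption⟩
      · rintro (⟨he, hv⟩ | ⟨he, hv⟩)
        · exact ⟨he, fun v hv' => Or.inl (hv v hv')⟩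
        · exact ⟨he, fun v hv' => Or.inr (hv v hv')⟩
  have hdisj : Disjoint (edgesIn G A) (edgesIn G B) := by
    rw [Set.disjoint_left]
    rintro e ⟨he, hvA⟩ ⟨_, hvB⟩
    induction e with
    | _ x y =>
      exact Set.disjoint_left.mp hd (hvA x (by simp)) (hvB x (by simp))
  rw [hunion, Set.ncard_union_eq hdisj (Set.toFinite _) (Set.toFinite _)]

/-- Any nonempty finite vertex set contains a nonempty connected subset whose
edge density (inside `G`) is at least that of the whole set. -/
lemma exists_dense_conn [Fintype V] [DecidableEq V] (G : SimpleGraph V) :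
    ∀ (n : ℕ) (S : Finset V), S.card ≤ n → S.Nonempty →
    ∃ C : Finset V, C ⊆ S ∧ C.Nonempty ∧ (G.induce (C : Set V)).Connected ∧
      (edgesIn G (S : Set V)).ncard * C.card ≤ (edgesIn G (C : Set V)).ncard * S.card := by
  intro n
  induction n with
  | zero => intro S h hne; simp [Finset.card_eq_zero.mp (Nat.le_zero.mp h)] at hne
  | succ n ih =>
    intro S hcard hne
    classical
    by_cases hc : (G.induce (S : Set V)).Connected
    · exact ⟨S, subset_rfl, hne, hc, le_rfl⟩
    · rw [SimpleGraph.connected_iff] at hc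
      push_neg at hc
      obtain ⟨v, hv⟩ := hne
      have hnon : Nonempty ((S : Set V) : Type _) := ⟨⟨v, by simpa using hv⟩⟩
      have hpre : ¬ (G.induce (S : Set V)).Preconnected := fun h => (hc h).elim hnon.some
      rw [SimpleGraph.Preconnected] at hpre
      push_neg at hpre
      obtain ⟨x, y, hxy⟩ := hpre
      set A : Finset V := S.filter
        (fun u => ∀ h : u ∈ (S : Set V), (G.induce (S : Set V)).Reachable x ⟨u, h⟩) with hA
      have hAS : A ⊆ S := Finset.filter_subset _ _
      have hxA : x.val ∈ A := by
        rw [hA, Finset.mem_filter]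
        exact ⟨by simp, fun h => SimpleGraph.Reachable.refl x⟩
      set B : Finset V := S \ A with hB
      have hyB : y.val ∈ B := by
        rw [hB, Finset.mem_sdiff]
        refine ⟨by simp, fun hyA => ?_⟩
        rw [hA, Finset.mem_filter] at hyA
        exact hxy (hyA.2 y.2)
      have hUnion : A ∪ B = S := Finset.union_sdiff_of_subset hAS
      have hDisj : Disjoint A B := Finset.disjoint_sdiff
      have hcross : ∀ a ∈ (A : Set V), ∀ b ∈ (B : Set V), ¬ G.Adj a b := by
        intro a ha b hb hadj
        rw [Finset.mem_coe, hB, Finset.mem_sdiff] at hb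
        rw [Finset.mem_coe, hA, Finset.mem_filter] at ha
        apply hb.2
        rw [hA, Finset.mem_filter]
        have hbS : b ∈ S := hb.1
        refine ⟨hbS, fun h => ?_⟩
        refine (ha.2 (by simpa using ha.1)).trans (SimpleGraph.Adj.reachable ?_)
        exact hadj
      have hsplit : (edgesIn G (S : Set V)).ncard
          = (edgesIn G (A : Set V)).ncard + (edgesIn G (B : Set V)).ncard := by
        rw [← hUnion, Finset.coe_union]
        exact edgesIn_split G (by exact_mod_cast hDisj) hcross
      have hcardsum : A.card + B.card = S.card := by
        rw [← hUnion, Finset.card_union_of_disjoint hDisj]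
      have hBpos : 0 < B.card := Finset.card_pos.mpr ⟨y.val, hyB⟩
      have hApos : 0 < A.card := Finset.card_pos.mpr ⟨x.val, hxA⟩
      set eS := (edgesIn G (S : Set V)).ncard
      set eA := (edgesIn G (A : Set V)).ncard
      set eB := (edgesIn G (B : Set V)).ncard
      have key : eS * A.card ≤ eA * S.card ∨ eS * B.card ≤ eB * S.card := by
        by_contra hcon
        push_neg at hcon
        nlinarith [hcon.1, hcon.2]
      rcases key with hgood | hgood
      case _ =>
        have hlt : A.card ≤ n := by omega
        obtain ⟨C, hCA, hCne, hCconn, hCineq⟩ := ih A hlt ⟨x.val, hxA⟩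
        refine ⟨C, hCA.trans hAS, hCne, hCconn, ?_⟩
        have h1 : eS * C.card * A.card ≤ (edgesIn G (C : Set V)).ncard * S.card * A.card := by
          nlinarith [Nat.mul_le_mul_right C.card hgood, Nat.mul_le_mul_right S.card hCineq]
        exact Nat.le_of_mul_le_mul_right h1 hApos
      case _ =>
        have hlt : B.card ≤ n := by omega
        obtain ⟨C, hCB, hCne, hCconn, hCineq⟩ := ih B hlt ⟨y.val, hyB⟩
        refine ⟨C, hCB.trans (Finset.sdiff_subset), hCne, hCconn, ?_⟩
        have h1 : eS * C.card * B.card ≤ (edgesIn G (C : Set V)).ncard * S.card * B.card := by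
          nlinarith [Nat.mul_le_mul_right C.card hgood, Nat.mul_le_mul_right S.card hCineq]
        exact Nat.le_of_mul_le_mul_right h1 hBpos

lemma induce_singleton_connected (G : SimpleGraph V) (b : V) :
    (G.induce ({b} : Set V)).Connected := by
  rw [SimpleGraph.connected_iff]
  refine ⟨fun x y => ?_, ⟨⟨b, rfl⟩⟩⟩
  have : x = y := Subtype.ext (x.2.trans y.2.symm)
  exact this ▸ SimpleGraph.Reachable.refl _

/-- A nonempty connected vertex set in a connected graph can be extended to any larger size
while staying connected. -/
lemma extend_conn [Fintype V] [DecidableEq V] (G : SimpleGraph V) (hG : G.Connected) :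
    ∀ (m : ℕ) (C : Finset V), C.Nonempty → (G.induce (C : Set V)).Connected →
      C.card + m ≤ Fintype.card V →
      ∃ S : Finset V, C ⊆ S ∧ S.card = C.card + m ∧ (G.induce (S : Set V)).Connected := by
  intro m
  induction m with
  | zero => exact fun C _ hconn _ => ⟨C, subset_rfl, by omega, hconn⟩
  | succ m ih =>
    intro C hne hconn hle
    have hCne : C ≠ Finset.univ := by
      intro h
      have h2 : C.card = Fintype.card V := by rw [h, Finset.card_univ]
      omega
    obtain ⟨w, hw⟩ : ∃ w, w ∉ C := by
      by_contra hcon; push_neg at hcon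
      exact hCne (Finset.eq_univ_iff_forall.mpr hcon)
    obtain ⟨u, hu⟩ := hne
    obtain ⟨dart, _, hd1, hd2⟩ :=
      ((hG.preconnected u w).some).exists_boundary_dart (C : Set V) (by simpa using hu)
        (by simpa using hw)
    have hconn' : (G.induce ((insert dart.snd C : Finset V) : Set V)).Connected := by
      have h := SimpleGraph.connected_induce_union (s := (C : Set V))
        (t := ({dart.snd} : Set V)) hconn.preconnected (induce_singleton_connected G dart.snd).preconnected
        hd1 rfl dart.adj
      have heq : (C : Set V) ∪ {dart.snd} = ((insert dart.snd C : Finset V) : Set V) := by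
        rw [Finset.coe_insert, Set.insert_eq, Set.union_comm]
      rwa [heq] at h
    have hsnd : dart.snd ∉ C := by simpa using hd2
    have hcard : (insert dart.snd C).card = C.card + 1 := Finset.card_insert_of_notMem hsnd
    obtain ⟨S, hCS, hScard, hSconn⟩ := ih (insert dart.snd C)
      ⟨dart.snd, Finset.mem_insert_self _ _⟩ hconn' (by omega)
    exact ⟨S, (Finset.subset_insert _ _).trans hCS, by omega, hSconn⟩

lemma edges_le_choose [Fintype V] [DecidableEq V] (G : SimpleGraph V) (C : Finset V) :
    (G.induce (C : Set V)).edgeSet.ncard ≤ (C.card).choose 2 := by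
  classical
  have h1 : (G.induce (C : Set V)).edgeSet.ncard = (G.induce (C : Set V)).edgeFinset.card := by
    simp [Set.ncard_eq_toFinset_card', SimpleGraph.edgeFinset]
  rw [h1]
  have h2 := SimpleGraph.card_edgeFinset_le_card_choose_two (G := G.induce (C : Set V))
  simpa using h2

lemma final_arith (d kk M eS : ℝ) (hkR : 0 < kk) (hMk : kk ≤ M)
    (hd2 : d ^ 2 ≤ 2 * eS) (heSnn : 0 ≤ eS) :
    d ^ 2 * (kk - 2) / (2 * kk * M) ≤ (2 * eS) / kk := by
  have hMpos : (0:ℝ) < 2 * kk * M := by nlinarith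
  rw [div_le_div_iff₀ hMpos hkR]
  nlinarith [mul_nonneg (sq_nonneg d) hkR.le,
    mul_nonneg (mul_nonneg (sub_nonneg.mpr hd2) hkR.le) hkR.le,
    mul_nonneg (mul_nonneg heSnn hkR.le) (by linarith : (0:ℝ) ≤ 2 * M - kk)]

private theorem stmt11' [Fintype V] [DecidableEq V] (G : SimpleGraph V) [DecidableRel G.Adj]
    (hG : G.Connected) (k : ℕ) (hke : Even k) (hk4 : 4 ≤ k)
    (hkn : 3 * k ≤ 2 * Fintype.card V)
    (Vh : Finset V) (hVh : Vh.card = k / 2)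
    (hhigh : ∀ u ∉ Vh, ∀ v ∈ Vh, G.degree u ≤ G.degree v)
    (d : ℝ) (hd : 0 ≤ d)
    (hsub : ∃ H : G.Subgraph, H.verts ⊆ (↑Vh : Set V)ᶜ ∧ H.verts.ncard = k ∧
      2 * H.edgeSet.ncard / H.verts.ncard ≥ d) :
    ∃ S : Finset V, S.card = k ∧ (G.induce (S : Set V)).Connected ∧
      2 * (G.induce (S : Set V)).edgeSet.ncard / S.card ≥ d ^ 2 * ((k : ℝ) - 2) /
        (2 * (k : ℝ) * max (k : ℝ) (2 * ((2 / (k : ℝ)) * ∑ v ∈ Vh, (G.degree v : ℝ)))) := by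
  classical
  obtain ⟨H, hHVh, hHk, hHd⟩ := hsub
  have hkR : (0:ℝ) < (k:ℝ) := by exact_mod_cast (by omega : 0 < k)
  -- the k-vertex set supporting H
  set S0 : Finset V := H.verts.toFinite.toFinset with hS0
  have hS0card : S0.card = k := by
    rw [hS0, ← Set.ncard_eq_toFinset_card _ H.verts.toFinite, hHk]
  have hS0coe : (S0 : Set V) = H.verts := by
    rw [hS0]; exact Set.Finite.coe_toFinset _
  -- edges of H are inside S0
  have hHsub : H.edgeSet ⊆ edgesIn G (S0 : Set V) := by
    intro e he
    refine ⟨H.edgeSet_subset he, ?_⟩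
    induction e with
    | _ a b =>
      rw [SimpleGraph.Subgraph.mem_edgeSet] at he
      intro v hv
      rw [hS0coe]
      simp only [Sym2.mem_iff] at hv
      rcases hv with rfl | rfl
      · exact he.fst_mem
      · exact he.snd_mem
  have hHe : d * (k:ℝ) / 2 ≤ (H.edgeSet.ncard : ℝ) := by
    rw [hHk, ge_iff_le, le_div_iff₀ hkR] at hHd
    linarith
  have he0 : ((edgesIn G (S0 : Set V)).ncard : ℝ) ≥ d * k / 2 := by
    have := Set.ncard_le_ncard hHsub (Set.toFinite _)
    have : (H.edgeSet.ncard : ℝ) ≤ ((edgesIn G (S0 : Set V)).ncard : ℝ) := by exact_mod_cast this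
    linarith
  -- dense connected core
  have hS0ne : S0.Nonempty := Finset.card_pos.mp (by omega)
  obtain ⟨C, hCS0, hCne, hCconn, hCineq⟩ := exists_dense_conn G S0.card S0 le_rfl hS0ne
  have hCk : C.card ≤ k := hS0card ▸ Finset.card_le_card hCS0
  have hCpos : 0 < C.card := Finset.card_pos.mpr hCne
  -- extend C to a connected set of size k
  have hkV : k ≤ Fintype.card V := by omega
  obtain ⟨S, hCS, hScard, hSconn⟩ := extend_conn G hG (k - C.card) C hCne hCconn (by omega)
  have hSk : S.card = k := by omega
  refine ⟨S, hSk, hSconn, ?_⟩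
  -- edge count bounds, all in ℝ
  set eC : ℝ := ((edgesIn G (C : Set V)).ncard : ℝ) with heC
  set eS : ℝ := ((G.induce (S : Set V)).edgeSet.ncard : ℝ) with heS
  clear_value eC eS
  have hESC : eC ≤ eS := by
    have h := Set.ncard_le_ncard
      (edgesIn_mono G (show (C : Set V) ⊆ (S : Set V) from Finset.coe_subset.mpr hCS))
      (Set.toFinite _)
    rw [heS, ← ncard_edgesIn, heC]
    exact_mod_cast h
  set c : ℝ := (C.card : ℝ) with hc
  clear_value c
  have hc1 : (1:ℝ) ≤ c := by
    have : (1:ℕ) ≤ C.card := hCpos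
    rw [hc]; exact_mod_cast this
  -- density of C at least density of S0 ≥ d
  have hmed : (d * k / 2) * c ≤ eC * k := by
    have h1 : ((edgesIn G (S0 : Set V)).ncard : ℝ) * c ≤ eC * k := by
      rw [hS0card] at hCineq
      rw [heC, hc]
      exact_mod_cast hCineq
    nlinarith [he0, hc1]
  have hdc : d * c ≤ 2 * eC := by nlinarith [hmed, hkR]
  -- C has at most c(c-1)/2 edges
  have hchoose : eC ≤ c * (c - 1) / 2 := by
    have h1 : (edgesIn G (C : Set V)).ncard ≤ (C.card).choose 2 := by
      rw [ncard_edgesIn]; exact edges_le_choose G C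
    have h2 : ((edgesIn G (C : Set V)).ncard : ℝ) ≤ (((C.card).choose 2 : ℕ) : ℝ) := by
      exact_mod_cast h1
    rw [heC, hc]
    calc ((edgesIn G (C : Set V)).ncard : ℝ) ≤ (((C.card).choose 2 : ℕ) : ℝ) := h2
      _ = (C.card : ℝ) * ((C.card : ℝ) - 1) / 2 := Nat.cast_choose_two (K := ℝ) C.card
  have hdc1 : d ≤ c - 1 := by nlinarith [hdc, hchoose, hc1]
  have hd2 : d ^ 2 ≤ 2 * eS := by nlinarith [hdc, hdc1, hESC, hd]
  -- final arithmetic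
  obtain ⟨M, hMk, hMeq⟩ : ∃ M : ℝ, (k:ℝ) ≤ M ∧
      M = max (k : ℝ) (2 * ((2 / (k : ℝ)) * ∑ v ∈ Vh, (G.degree v : ℝ))) :=
    ⟨_, le_max_left _ _, rfl⟩
  have heSnn : 0 ≤ eS := by rw [heS]; positivity
  have hk4R : (4:ℝ) ≤ (k:ℝ) := by exact_mod_cast hk4
  have step1 : d ^ 2 * ((k:ℝ) - 2) / (2 * (k:ℝ) * M) ≤ (2 * eS) / (k:ℝ) :=
    final_arith d (k:ℝ) M eS hkR hMk hd2 heSnn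
  rw [hSk, ge_iff_le, ← hMeq]
  calc d ^ 2 * ((k:ℝ) - 2) / (2 * (k:ℝ) * M) ≤ (2 * eS) / (k:ℝ) := step1
    _ = 2 * eS / (k:ℝ) := by ring

/-- if `G[V∖V_h]` contains a `k`-subgraph of average degree at least `d`,
then `G` has a connected `k`-subgraph of density at least `d²(k-2)/(2k·max{k,2d_h})`. -/
theorem stmt11 [Fintype V] [DecidableEq V] (G : SimpleGraph V) [DecidableRel G.Adj]
    (hG : G.Connected) (k : ℕ) (hke : Even k) (hk4 : 4 ≤ k)
    (hkn : 3 * k ≤ 2 * Fintype.card V)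
    (Vh : Finset V) (hVh : Vh.card = k / 2)
    (hhigh : ∀ u ∉ Vh, ∀ v ∈ Vh, G.degree u ≤ G.degree v)
    (d : ℝ) (hd : 0 ≤ d)
    (hsub : ∃ H : G.Subgraph, H.verts ⊆ (↑Vh : Set V)ᶜ ∧ H.verts.ncard = k ∧
      subDensity H ≥ d) :
    ∃ S : Finset V, S.card = k ∧ (G.induce (S : Set V)).Connected ∧
      indDensity G S ≥ d ^ 2 * ((k : ℝ) - 2) /
        (2 * (k : ℝ) * max (k : ℝ) (2 * ((2 / (k : ℝ)) * ∑ v ∈ Vh, (G.degree v : ℝ)))) := by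
  classical
  simp only [subDensity] at hsub
  obtain ⟨S, h1, h2, h3⟩ := stmt11' G hG k hke hk4 hkn Vh hVh hhigh d hd hsub
  refine ⟨S, h1, h2, ?_⟩
  simpa [indDensity] using h3
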